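/- Let f be a characteristic function whose essential support S_f has exactly 2k+1 connected components (k ≥ 0 an integer), and let n ≥ 2 be an integer. Then the set C_n(f) = {g a characteristic function : g^n = f^n} has cardinality at most n^k. -/

import Mathlib

open MeasureTheory Set

/-- The characteristic function of a measure `μ` on `ℝ`: `x ↦ ∫ e^{ixt} dμ(t)`. -/
noncomputable def charFunOf (μ : Measure ℝ) : ℝ → ℂ :=
  fun x => ∫ t, Complex.exp (x * t * Complex.I) ∂μ

/-- `f` is the characteristic function of some probability measure on `ℝ`. -/
def IsCharFun (f : ℝ → ℂ) : Prop :=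
  ∃ μ : Measure ℝ, IsProbabilityMeasure μ ∧ f = charFunOf μ

lemma norm_exp_real_mul_I (x t : ℝ) : ‖Complex.exp (x * t * Complex.I)‖ = 1 := by
  have h : (x : ℂ) * t * Complex.I = ((x * t : ℝ) : ℂ) * Complex.I := by push_cast; ring
  rw [h, Complex.norm_exp_ofReal_mul_I]

lemma continuous_charFunOf (μ : Measure ℝ) [IsProbabilityMeasure μ] :
    Continuous (charFunOf μ) := by
  apply continuous_of_dominated (bound := fun _ => (1 : ℝ))
  · intro x
    apply Continuous.aestronglyMeasurable
    exact Complex.continuous_exp.comp (by continuity)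
  · intro x
    filter_upwards with t
    rw [norm_exp_real_mul_I]
  · exact integrable_const 1
  · filter_upwards with t
    exact Complex.continuous_exp.comp (by continuity)

lemma charFunOf_zero (μ : Measure ℝ) [IsProbabilityMeasure μ] : charFunOf μ 0 = 1 := by
  simp [charFunOf]

lemma charFunOf_neg (μ : Measure ℝ) (x : ℝ) :
    charFunOf μ (-x) = starRingEnd ℂ (charFunOf μ x) := by
  rw [charFunOf, charFunOf, ← integral_conj]
  congr 1
  ext t
  rw [← Complex.exp_conj]
  congr 1
  simp [Complex.conj_I]

lemma rootSet_finite {n : ℕ} (hn : 0 < n) : {z : ℂ | z ^ n = 1}.Finite := by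
  have h : {z : ℂ | z ^ n = 1} ⊆ ↑(Polynomial.nthRootsFinset n (1 : ℂ)) := by
    intro z hz
    rw [Finset.mem_coe, Polynomial.mem_nthRootsFinset hn]
    exact hz
  exact (Polynomial.nthRootsFinset n (1 : ℂ)).finite_toSet.subset h

lemma rootSet_ncard_le {n : ℕ} (hn : 0 < n) : {z : ℂ | z ^ n = 1}.ncard ≤ n := by
  have h : {z : ℂ | z ^ n = 1} ⊆ ↑(Polynomial.nthRootsFinset n (1 : ℂ)) := by
    intro z hz
    rw [Finset.mem_coe, Polynomial.mem_nthRootsFinset hn]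
    exact hz
  calc {z : ℂ | z ^ n = 1}.ncard ≤ (↑(Polynomial.nthRootsFinset n (1 : ℂ)) : Set ℂ).ncard :=
        Set.ncard_le_ncard h (Polynomial.nthRootsFinset n (1 : ℂ)).finite_toSet
    _ = (Polynomial.nthRootsFinset n (1 : ℂ)).card := Set.ncard_coe_finset _
    _ ≤ Multiset.card (Polynomial.nthRoots n (1 : ℂ)) := by
        rw [Polynomial.nthRootsFinset_def]; exact Multiset.toFinset_card_le _
    _ ≤ n := Polynomial.card_nthRoots n 1

lemma ratio_const {f g : ℝ → ℂ} (hf : Continuous f) (hg : Continuous g) {n : ℕ} (hn : 0 < n)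
    (hpow : ∀ x, g x ^ n = f x ^ n) {C : Set ℝ} (hC : IsPreconnected C)
    (hne : ∀ y ∈ C, f y ≠ 0) {x y : ℝ} (hx : x ∈ C) (hy : y ∈ C) :
    g x / f x = g y / f y := by
  have hfin := rootSet_finite hn
  haveI := hfin.to_subtype
  exact hC.constant_of_mapsTo (T := {z : ℂ | z ^ n = 1}) hfin.isDiscrete
    (hg.continuousOn.div hf.continuousOn hne)
    (fun z hz => by
      show (g z / f z) ^ n = 1
      rw [div_pow, hpow, div_self (pow_ne_zero n (hne z hz))]) hx hy

/-- If the essential support of a characteristic function `f` has exactly `2k+1`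
connected components, then `C_n(f)` has at most `n^k` elements. -/
theorem stmt6 (f : ℝ → ℂ) (hf : IsCharFun f) (k n : ℕ) (hn : 2 ≤ n)
    (hfin : {C : Set ℝ | ∃ x : ℝ, f x ≠ 0 ∧ C = connectedComponentIn {y : ℝ | f y ≠ 0} x}.Finite)
    (hcard : {C : Set ℝ | ∃ x : ℝ, f x ≠ 0 ∧
        C = connectedComponentIn {y : ℝ | f y ≠ 0} x}.ncard = 2 * k + 1) :
    Cardinal.mk {g : ℝ → ℂ | IsCharFun g ∧ ∀ x, g x ^ n = f x ^ n} ≤ ((n ^ k : ℕ) : Cardinal) := by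
  obtain ⟨μ, hμ, rfl⟩ := hf
  haveI := hμ
  set f := charFunOf μ with hfdef
  have hn0 : 0 < n := by omega
  have hfc : Continuous f := continuous_charFunOf μ
  have hf0 : f 0 = 1 := charFunOf_zero μ
  have hfconj : ∀ x, f (-x) = starRingEnd ℂ (f x) := charFunOf_neg μ
  set S : Set ℝ := {y : ℝ | f y ≠ 0} with hSdef
  set Comps : Set (Set ℝ) := {C : Set ℝ | ∃ x : ℝ, f x ≠ 0 ∧ C = connectedComponentIn S x}
    with hCompsdef
  -- basic facts about S
  have h0S : (0 : ℝ) ∈ S := by simp [hSdef, hf0]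
  have hSsymm : ∀ y : ℝ, -y ∈ S ↔ y ∈ S := by
    intro y
    simp only [hSdef, mem_setOf_eq, hfconj y, map_ne_zero]
  -- negation maps components to components
  have hnegS : Neg.neg '' S = S := by
    ext y
    constructor
    · rintro ⟨a, ha, rfl⟩; exact (hSsymm a).mpr ha
    · intro hy; exact ⟨-y, (hSsymm y).mpr hy, neg_neg y⟩
  have hnegcomp : ∀ x ∈ S, connectedComponentIn S (-x) = Neg.neg '' connectedComponentIn S x := by
    intro x hx
    have h := (Homeomorph.neg ℝ).image_connectedComponentIn (s := S) hx
    rw [show (⇑(Homeomorph.neg ℝ)) = (Neg.neg : ℝ → ℝ) from rfl] at h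
    rw [hnegS] at h
    exact h.symm
  -- trichotomy for components
  have htri : ∀ x ∈ S, (0 : ℝ) ∈ connectedComponentIn S x ∨
      connectedComponentIn S x ⊆ Ioi 0 ∨ connectedComponentIn S x ⊆ Iio 0 := by
    intro x hx
    set C := connectedComponentIn S x with hC
    by_cases h0 : (0 : ℝ) ∈ C
    · exact Or.inl h0
    have hxC : x ∈ C := mem_connectedComponentIn hx
    have hconn : IsPreconnected C := isPreconnected_connectedComponentIn
    have hord := hconn.ordConnected
    have hxne : x ≠ 0 := fun h => h0 (h ▸ hxC)
    rcases hxne.lt_or_gt with hxlt | hxgt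
    · refine Or.inr (Or.inr fun y hy => ?_)
      rw [mem_Iio]
      by_contra hy0
      push_neg at hy0
      exact h0 (hord.out hxC hy ⟨hxlt.le, hy0⟩)
    · refine Or.inr (Or.inl fun y hy => ?_)
      rw [mem_Ioi]
      by_contra hy0
      push_neg at hy0
      exact h0 (hord.out hy hxC ⟨hy0, hxgt.le⟩)
  -- the distinguished component and positive/negative components
  set Z := connectedComponentIn S 0 with hZdef
  set P : Set (Set ℝ) := {C | C ∈ Comps ∧ C ⊆ Ioi 0} with hPdef
  set N : Set (Set ℝ) := {C | C ∈ Comps ∧ C ⊆ Iio 0} with hNdef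
  have hPsub : P ⊆ Comps := fun C hC => hC.1
  have hNsub : N ⊆ Comps := fun C hC => hC.1
  have hPfin : P.Finite := hfin.subset hPsub
  have hNfin : N.Finite := hfin.subset hNsub
  have hZmem : Z ∈ Comps := ⟨0, by simpa [hSdef] using h0S, rfl⟩
  have h0Z : (0 : ℝ) ∈ Z := mem_connectedComponentIn h0S
  have hZnotPN : Z ∉ P ∪ N := by
    rintro (⟨-, hZP⟩ | ⟨-, hZN⟩)
    · simpa using hZP h0Z
    · simpa using hZN h0Z
  have hPN : Disjoint P N := by
    rw [Set.disjoint_left]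
    rintro C ⟨⟨x, hx, rfl⟩, hCP⟩ ⟨-, hCN⟩
    have hxC : x ∈ connectedComponentIn S x := mem_connectedComponentIn hx
    exact lt_asymm (mem_Ioi.mp (hCP hxC)) (mem_Iio.mp (hCN hxC))
  have hdecomp : Comps = insert Z (P ∪ N) := by
    ext C
    constructor
    · rintro ⟨x, hx, rfl⟩
      have hxS : x ∈ S := hx
      rcases htri x hxS with h0 | hpos | hneg
      · left
        exact connectedComponentIn_eq h0
      · exact Or.inr (Or.inl ⟨⟨x, hx, rfl⟩, hpos⟩)
      · exact Or.inr (Or.inr ⟨⟨x, hx, rfl⟩, hneg⟩)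
    · rintro (rfl | hC | hC)
      · exact hZmem
      · exact hPsub hC
      · exact hNsub hC
  -- negation is a bijection between P and N
  have himg : (fun C : Set ℝ => Neg.neg '' C) '' P = N := by
    ext C
    constructor
    · rintro ⟨D, ⟨⟨x, hx, rfl⟩, hDP⟩, rfl⟩
      refine ⟨⟨-x, ?_, ?_⟩, ?_⟩
      · exact (hSsymm x).mpr hx
      · exact (hnegcomp x hx).symm
      · rintro y ⟨z, hz, rfl⟩
        simpa using neg_neg_of_pos (mem_Ioi.mp (hDP hz))
    · rintro ⟨⟨x, hx, rfl⟩, hCN⟩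
      refine ⟨connectedComponentIn S (-x), ⟨⟨-x, (hSsymm x).mpr hx, rfl⟩, ?_⟩, ?_⟩
      · rw [hnegcomp x hx]
        rintro y ⟨z, hz, rfl⟩
        simpa using neg_pos.mpr (show z < 0 from hCN hz)
      · show Neg.neg '' connectedComponentIn S (-x) = connectedComponentIn S x
        rw [hnegcomp x hx, Set.image_image]
        simp
  have hmesinj : Function.Injective (fun C : Set ℝ => Neg.neg '' C) := by
    have hinv : Function.Involutive (fun C : Set ℝ => Neg.neg '' C) := by
      intro C
      simp [Set.image_image]
    exact hinv.injective
  have hNcard : N.ncard = P.ncard := by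
    rw [← himg, Set.ncard_image_of_injective _ hmesinj]
  have hPk : P.ncard = k := by
    have h1 : Comps.ncard = (P ∪ N).ncard + 1 := by
      rw [hdecomp, Set.ncard_insert_of_notMem hZnotPN (hPfin.union hNfin)]
    have h2 : (P ∪ N).ncard = P.ncard + N.ncard := Set.ncard_union_eq hPN hPfin hNfin
    omega
  -- the set of n-th roots of unity
  set R : Set ℂ := {z : ℂ | z ^ n = 1} with hRdef
  have hRfin : R.Finite := rootSet_finite hn0
  have hRn : R.ncard ≤ n := rootSet_ncard_le hn0
  set G : Set (ℝ → ℂ) := {g : ℝ → ℂ | IsCharFun g ∧ ∀ x, g x ^ n = f x ^ n} with hGdef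
  have hPne : ∀ C : ↥P, (C : Set ℝ).Nonempty := by
    rintro ⟨C, ⟨⟨x, hx, rfl⟩, -⟩⟩
    exact ⟨x, mem_connectedComponentIn hx⟩
  have hPS : ∀ (C : ↥P) (y : ℝ), y ∈ (C : Set ℝ) → f y ≠ 0 := by
    intro C y hy
    obtain ⟨⟨x, hx, hCeq⟩, -⟩ := C.2
    rw [hCeq] at hy
    exact connectedComponentIn_subset S x hy
  -- the main uniqueness argument
  have main : ∀ g₁ ∈ G, ∀ g₂ ∈ G,
      (∀ C : ↥P, g₁ (hPne C).some / f (hPne C).some = g₂ (hPne C).some / f (hPne C).some) →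
      g₁ = g₂ := by
    intro g₁ hg₁ g₂ hg₂ hvals
    obtain ⟨⟨ν₁, hν₁, hg₁f⟩, hg₁pow⟩ := hg₁
    obtain ⟨⟨ν₂, hν₂, hg₂f⟩, hg₂pow⟩ := hg₂
    haveI := hν₁; haveI := hν₂
    have hg₁c : Continuous g₁ := by rw [hg₁f]; exact continuous_charFunOf ν₁
    have hg₂c : Continuous g₂ := by rw [hg₂f]; exact continuous_charFunOf ν₂
    have hg₁0 : g₁ 0 = 1 := by rw [hg₁f]; exact charFunOf_zero ν₁
    have hg₂0 : g₂ 0 = 1 := by rw [hg₂f]; exact charFunOf_zero ν₂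
    have hg₁conj : ∀ x, g₁ (-x) = starRingEnd ℂ (g₁ x) := by
      intro x; rw [hg₁f]; exact charFunOf_neg ν₁ x
    have hg₂conj : ∀ x, g₂ (-x) = starRingEnd ℂ (g₂ x) := by
      intro x; rw [hg₂f]; exact charFunOf_neg ν₂ x
    have hnonneg : ∀ x : ℝ, 0 ≤ x → g₁ x = g₂ x := by
      intro x hx
      by_cases hfx : f x = 0
      · have h₁ : g₁ x = 0 := by
          have := hg₁pow x
          rw [hfx, zero_pow hn0.ne'] at this
          exact (pow_eq_zero_iff hn0.ne').mp this
        have h₂ : g₂ x = 0 := by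
          have := hg₂pow x
          rw [hfx, zero_pow hn0.ne'] at this
          exact (pow_eq_zero_iff hn0.ne').mp this
        rw [h₁, h₂]
      · have hxS : x ∈ S := hfx
        have hCpre : IsPreconnected (connectedComponentIn S x) :=
          isPreconnected_connectedComponentIn
        have hCne0 : ∀ y ∈ connectedComponentIn S x, f y ≠ 0 := fun y hy =>
          connectedComponentIn_subset S x hy
        have hxC : x ∈ connectedComponentIn S x := mem_connectedComponentIn hxS
        by_cases h0C : (0 : ℝ) ∈ connectedComponentIn S x
        · have e₁ := ratio_const hfc hg₁c hn0 hg₁pow hCpre hCne0 hxC h0C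
          have e₂ := ratio_const hfc hg₂c hn0 hg₂pow hCpre hCne0 hxC h0C
          rw [hg₁0, hf0, div_one] at e₁
          rw [hg₂0, hf0, div_one] at e₂
          have h₁ : g₁ x = f x := (div_eq_one_iff_eq hfx).mp e₁
          have h₂ : g₂ x = f x := (div_eq_one_iff_eq hfx).mp e₂
          rw [h₁, h₂]
        · rcases htri x hxS with h0 | hpos | hneg
          · exact absurd h0 h0C
          · have hCP : connectedComponentIn S x ∈ P := ⟨⟨x, hfx, rfl⟩, hpos⟩
            set Cp : ↥P := ⟨connectedComponentIn S x, hCP⟩ with hCp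
            have hcC : (hPne Cp).some ∈ connectedComponentIn S x := (hPne Cp).some_mem
            have e₁ := ratio_const hfc hg₁c hn0 hg₁pow hCpre hCne0 hxC hcC
            have e₂ := ratio_const hfc hg₂c hn0 hg₂pow hCpre hCne0 hxC hcC
            have hdiv : g₁ x / f x = g₂ x / f x := by
              rw [e₁, e₂]; exact hvals Cp
            rw [div_eq_div_iff hfx hfx] at hdiv
            exact mul_right_cancel₀ hfx hdiv
          · exact absurd hx (not_le.mpr (hneg hxC))
    funext x
    rcases le_or_gt 0 x with hx | hx
    · exact hnonneg x hx
    · have hmx := hnonneg (-x) (by linarith)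
      have h₁ := hg₁conj (-x)
      have h₂ := hg₂conj (-x)
      rw [neg_neg] at h₁ h₂
      rw [h₁, h₂, hmx]
  -- the injection into functions from P to the n-th roots of unity
  have hinj : Function.Injective (fun g : ↥G => fun C : ↥P =>
      (⟨(g : ℝ → ℂ) (hPne C).some / f (hPne C).some, by
        have hfne : f (hPne C).some ≠ 0 := hPS C _ (hPne C).some_mem
        show ((g : ℝ → ℂ) (hPne C).some / f (hPne C).some) ^ n = 1
        rw [div_pow, g.2.2 (hPne C).some, div_self (pow_ne_zero n hfne)]⟩ : ↥R)) := by
    intro g₁ g₂ h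
    apply Subtype.ext
    apply main g₁.1 g₁.2 g₂.1 g₂.2
    intro C
    have hC := congrFun h C
    exact Subtype.ext_iff.mp hC
  haveI := hPfin.fintype
  haveI := hRfin.fintype
  have hcardP : Fintype.card ↥P = k := by
    rw [← Nat.card_eq_fintype_card, Nat.card_coe_set_eq, hPk]
  have hcardR : Fintype.card ↥R ≤ n := by
    rw [← Nat.card_eq_fintype_card, Nat.card_coe_set_eq]
    exact hRn
  calc Cardinal.mk ↥G ≤ Cardinal.mk (↥P → ↥R) := Cardinal.mk_le_of_injective hinj
    _ = Cardinal.mk ↥R ^ Cardinal.mk ↥P := (Cardinal.power_def _ _).symm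
    _ ≤ (n : Cardinal) ^ (k : Cardinal) := by
        rw [Cardinal.mk_fintype ↥P, hcardP]
        exact Cardinal.power_le_power_right
          (by rw [Cardinal.mk_fintype ↥R]; exact_mod_cast hcardR)
    _ = ((n ^ k : ℕ) : Cardinal) := (Nat.cast_pow n k).symm
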